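/- The normalized symmetric Chamfer distance does not satisfy the merge-monotonicity property enjoyed by the asymmetric Chamfer distance: there exist pairwise disjoint finite nonempty subsets A, B, C of ℝ (with distance d(x, y) = |x − y|) such that Ch_NS(C, A ∪ B) > min(Ch_NS(C, A), Ch_NS(C, B)). Concretely, for C = {0}, A = {1}, B = {100}, one has Ch_NS(C, A ∪ B) = 103/2 while min(Ch_NS(C, A), Ch_NS(C, B)) = 2. -/
import Mathlib


/-- The Chamfer distance from a finite set `A` to a finite nonempty set `B`:
`Ch(A, B) = Σ_{a ∈ A} min_{b ∈ B} d(a, b)`. -/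
noncomputable def chamfer {X : Type*} [MetricSpace X] (A B : Finset X)
    (hB : B.Nonempty) : ℝ :=
  ∑ a ∈ A, B.inf' hB fun b => dist a b

/-- The normalized symmetric Chamfer distance:
`Ch_NS(A, B) = Ch(A, B)/|A| + Ch(B, A)/|B|`. -/
noncomputable def chamferNS {X : Type*} [MetricSpace X] (A B : Finset X)
    (hA : A.Nonempty) (hB : B.Nonempty) : ℝ :=
  chamfer A B hB / A.card + chamfer B A hA / B.card

/-- The normalized symmetric Chamfer distance does not satisfy merge-monotonicity:
there are pairwise disjoint finite nonempty subsets `A`, `B`, `C` of `ℝ` with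
`Ch_NS(C, A ∪ B) > min (Ch_NS(C, A)) (Ch_NS(C, B))`.  Concretely, for `C = {0}`,
`A = {1}`, `B = {100}`, one has `Ch_NS(C, A ∪ B) = 103/2` while
`min (Ch_NS(C, A)) (Ch_NS(C, B)) = 2`. -/
theorem chamferNS_not_merge_monotone :
    (∃ (A B C : Finset ℝ) (hA : A.Nonempty) (hB : B.Nonempty) (hC : C.Nonempty),
      Disjoint A B ∧ Disjoint A C ∧ Disjoint B C ∧
      chamferNS C (A ∪ B) hC (hA.inl) > min (chamferNS C A hC hA) (chamferNS C B hC hB)) ∧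
    chamferNS ({0} : Finset ℝ) (({1} : Finset ℝ) ∪ ({100} : Finset ℝ))
        (Finset.singleton_nonempty _) ((Finset.singleton_nonempty _).inl) = 103/2 ∧
    min (chamferNS ({0} : Finset ℝ) ({1} : Finset ℝ)
          (Finset.singleton_nonempty _) (Finset.singleton_nonempty _))
        (chamferNS ({0} : Finset ℝ) ({100} : Finset ℝ)
          (Finset.singleton_nonempty _) (Finset.singleton_nonempty _)) = 2 := by

  have key : chamferNS ({0} : Finset ℝ) (({1} : Finset ℝ) ∪ ({100} : Finset ℝ))
        (Finset.singleton_nonempty _) ((Finset.singleton_nonempty _).inl) = 103/2 := by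
    simp [chamferNS, chamfer, Finset.inf'_insert, Real.dist_eq,
      show ({1}:Finset ℝ) ∪ {100} = {1,100} by rfl, Finset.sum_pair]
    norm_num
  have hmin : min (chamferNS ({0} : Finset ℝ) ({1} : Finset ℝ)
          (Finset.singleton_nonempty _) (Finset.singleton_nonempty _))
        (chamferNS ({0} : Finset ℝ) ({100} : Finset ℝ)
          (Finset.singleton_nonempty _) (Finset.singleton_nonempty _)) = 2 := by
    simp [chamferNS, chamfer, Real.dist_eq]
    norm_num
  refine ⟨⟨{1}, {100}, {0}, Finset.singleton_nonempty _, Finset.singleton_nonempty _,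
    Finset.singleton_nonempty _, Finset.disjoint_singleton.mpr (by norm_num), Finset.disjoint_singleton.mpr (by norm_num), Finset.disjoint_singleton.mpr (by norm_num), ?_⟩, key, hmin⟩
  rw [key, hmin]
  norm_num
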